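/- Let P be a k-partial profile over m alternatives with a given split of voters N = N_1 ⊔ N_2, |N_1| = |N_2|. Let P' be the completion of P and P'' = Shuffle_{[k,m]}^1(P'), with each copy of a voter assigned to the same side of the split as the original voter. Then there exists a length-k scoring vector achieving perfect consistency on the split of P if and only if there exists a length-m scoring vector achieving perfect consistency on the inherited split of P''. -/

import Mathlib

open scoped Classical

noncomputable section

/-- A strict ranking of the alternatives `A` among `m` positions: each alternative is
assigned its (0-indexed) position. -/
abbrev Ranking (A : Type*) (m : ℕ) := A ≃ Fin m

/-- A weak ranking: a complete and transitive binary relation (ties allowed).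
`ge a b` means `a` is ranked weakly above `b`. -/
structure WeakRanking (A : Type*) where
  ge : A → A → Prop
  total : ∀ a b, ge a b ∨ ge b a
  trans : ∀ a b c, ge a b → ge b c → ge a c

namespace WeakRanking

variable {A : Type*}

/-- `a` is ranked strictly above `b`. -/
def strict (r : WeakRanking A) (a b : A) : Prop := r.ge a b ∧ ¬ r.ge b a

/-- `a` and `b` are tied. -/
def tied (r : WeakRanking A) (a b : A) : Prop := r.ge a b ∧ r.ge b a

/-- The reversed weak ranking. -/
def rev (r : WeakRanking A) : WeakRanking A where
  ge a b := r.ge b a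
  total a b := r.total b a
  trans _ _ _ h1 h2 := r.trans _ _ _ h2 h1

/-- The all-tied weak ranking. -/
def allTied (A : Type*) : WeakRanking A :=
  ⟨fun _ _ => True, fun _ _ => Or.inl trivial, fun _ _ _ _ _ => trivial⟩

end WeakRanking

variable {A : Type*} {m : ℕ}

/-- The weak ranking induced by a strict ranking (smaller position = ranked higher). -/
def Ranking.toWeak (r : Ranking A m) : WeakRanking A where
  ge a b := r a ≤ r b
  total a b := le_total _ _
  trans _ _ _ h1 h2 := le_trans h1 h2

/-- The position-reversal permutation. -/
def finRevPerm (m : ℕ) : Equiv.Perm (Fin m) :=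
  ⟨Fin.rev, Fin.rev, Fin.rev_rev, Fin.rev_rev⟩

/-- The reversed strict ranking. -/
def Ranking.revR (r : Ranking A m) : Ranking A m := r.trans (finRevPerm m)

/-- Kendall-Tau distance with ties between two weak rankings: the sum over unordered pairs
of distinct alternatives of `D + T/2`, realized as half the sum over ordered pairs. -/
def KT [Fintype A] (r1 r2 : WeakRanking A) : ℝ :=
  (∑ p ∈ Finset.univ.offDiag,
      ((if (r1.strict p.1 p.2 ∧ r2.strict p.2 p.1) ∨ (r1.strict p.2 p.1 ∧ r2.strict p.1 p.2)
          then (1 : ℝ) else 0)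
        + (if r1.tied p.1 p.2 ∨ r2.tied p.1 p.2 then (1 : ℝ) else 0) / 2)) / 2

/-- A profile: the list of the voters' strict rankings. -/
abbrev Profile (A : Type*) (m : ℕ) := List (Ranking A m)

/-- A social welfare function. -/
abbrev SWF (A : Type*) (m : ℕ) := Profile A m → WeakRanking A

/-- Reverse every voter's ranking. -/
def revProfile (σ : Profile A m) : Profile A m := σ.map Ranking.revR

/-- A monotone positional scoring vector `1 = s₁ ≥ s₂ ≥ … ≥ sₘ = 0`. -/
structure ScoreVec (m : ℕ) where
  s : Fin m → ℝ
  anti : Antitone s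
  first : ∀ h : 0 < m, s ⟨0, h⟩ = 1
  last : ∀ h : 0 < m, s ⟨m - 1, Nat.sub_lt h Nat.one_pos⟩ = 0

/-- Total score of alternative `a` in profile `σ`. -/
def totalScore (sv : ScoreVec m) (σ : Profile A m) (a : A) : ℝ :=
  (σ.map fun r => sv.s (r a)).sum

/-- The positional scoring rule associated to a scoring vector. -/
def posSWF (sv : ScoreVec m) : SWF A m := fun σ =>
  { ge := fun a b => totalScore sv σ b ≤ totalScore sv σ a
    total := fun _ _ => le_total _ _
    trans := fun _ _ _ h1 h2 => le_trans h2 h1 }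

/-- The plurality scoring vector `(1,0,…,0)`. -/
def pluralityVec (m : ℕ) (hm : 2 ≤ m) : ScoreVec m where
  s i := if i.val = 0 then 1 else 0
  anti := by
    intro i j hij
    have h' : i.val ≤ j.val := hij
    dsimp only
    by_cases hj : j.val = 0
    · have hi : i.val = 0 := by omega
      simp [hi, hj]
    · by_cases hi : i.val = 0 <;> simp [hi, hj]
  first h := by simp
  last h := by
    have h' : m - 1 ≠ 0 := by omega
    simp [h']

/-- The veto scoring vector `(1,…,1,0)`. -/
def vetoVec (m : ℕ) (hm : 2 ≤ m) : ScoreVec m where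
  s i := if i.val = m - 1 then 0 else 1
  anti := by
    intro i j hij
    have h' : i.val ≤ j.val := hij
    dsimp only
    by_cases hi : i.val = m - 1
    · have hj : j.val = m - 1 := by have := j.isLt; omega
      simp [hi, hj]
    · by_cases hj : j.val = m - 1 <;> simp [hi, hj]
  first h := by
    have h' : (0 : ℕ) ≠ m - 1 := by omega
    simp [h']
  last h := by simp

/-- The reverse scoring vector, `s'_j = 1 - s_{m+1-j}`. -/
def ScoreVec.revVec (sv : ScoreVec m) : ScoreVec m where
  s j := 1 - sv.s j.rev
  anti := by
    intro i j hij
    have h1 : j.rev ≤ i.rev := by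
      simp only [Fin.le_def, Fin.val_rev]
      have h' : i.val ≤ j.val := hij
      omega
    have h2 := sv.anti h1
    dsimp only
    linarith
  first h := by
    have h1 : (⟨0, h⟩ : Fin m).rev = ⟨m - 1, Nat.sub_lt h Nat.one_pos⟩ := by
      ext
      simp [Fin.val_rev]
    try dsimp only
    rw [h1, sv.last h]
    ring
  last h := by
    have h1 : (⟨m - 1, Nat.sub_lt h Nat.one_pos⟩ : Fin m).rev = ⟨0, h⟩ := by
      ext
      simp only [Fin.val_rev]
      omega
    try dsimp only
    rw [h1, sv.first h]
    ring

/-- One side of the split of the profile `σ` given by assignment `β`. -/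
def subProfile (σ : Profile A m) (β : Fin σ.length → Bool) (b : Bool) : Profile A m :=
  ((List.finRange σ.length).filter fun i => β i == b).map σ.get

/-- Apply an SWF, producing the all-tied ranking on an empty (sub)profile. -/
def applySplit (f : SWF A m) (σ : Profile A m) : WeakRanking A :=
  if σ = [] then WeakRanking.allTied A else f σ

/-- Expected Kendall-Tau disagreement of `f` between the two sides of a uniformly random
split of `σ` (each voter placed independently and uniformly on one of the two sides). -/
def expDisagree [Fintype A] (f : SWF A m) (σ : Profile A m) : ℝ :=
  (∑ β : Fin σ.length → Bool,
      KT (applySplit f (subProfile σ β true)) (applySplit f (subProfile σ β false)))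
    / 2 ^ σ.length

/-- Aggregation by Consistency over a set of SWFs: the rules minimizing expected
disagreement across a random split. -/
def AbC [Fintype A] (F : Set (SWF A m)) (σ : Profile A m) : Set (SWF A m) :=
  {f | f ∈ F ∧ ∀ g ∈ F, expDisagree f σ ≤ expDisagree g σ}

/-- Aggregation by Consistency over a set of positional scoring vectors. -/
def AbCVec [Fintype A] (F : Set (ScoreVec m)) (σ : Profile A m) : Set (ScoreVec m) :=
  {sv | sv ∈ F ∧ ∀ sv' ∈ F, expDisagree (posSWF sv) σ ≤ expDisagree (posSWF sv') σ}

/-- All permutations of the positions that fix every position outside `S`. -/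
def permsOn (S : Finset (Fin m)) : List (Equiv.Perm (Fin m)) :=
  (Finset.univ.filter fun π : Equiv.Perm (Fin m) => ∀ i ∉ S, π i = i).toList

/-- The `k`-shuffling of profile `σ` with respect to the set of positions `S`: each voter's
ranking is replaced by `k·m!` copies, split evenly among the `|S|!` permutations of `S`. -/
def shuffle (S : Finset (Fin m)) (k : ℕ) (σ : Profile A m) : Profile A m :=
  σ.flatMap fun r =>
    (permsOn S).flatMap fun π =>
      List.replicate (k * Nat.factorial m / Nat.factorial S.card) (r.trans π)

/-- The positions `2,…,m` (0-indexed: `1,…,m-1`). -/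
def tailPositions (m : ℕ) : Finset (Fin m) := Finset.univ.filter fun i => 1 ≤ i.val

/-- Number of voters ranking `a` first. -/
def topCount (σ : Profile A m) (a : A) : ℕ := σ.countP fun r => (r a).val == 0

/-- A weak ranking has no ties among distinct alternatives. -/
def NoTies (w : WeakRanking A) : Prop := ∀ a b : A, a ≠ b → ¬ w.tied a b

/-- Probability (over a uniformly random split of `σ`) that the outputs of `f` on the two
sides order `a` and `b` strictly oppositely. -/
def probD [Fintype A] (f : SWF A m) (σ : Profile A m) (a b : A) : ℝ :=
  ((Finset.univ.filter fun β : Fin σ.length → Bool =>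
      ((applySplit f (subProfile σ β true)).strict a b ∧
        (applySplit f (subProfile σ β false)).strict b a) ∨
      ((applySplit f (subProfile σ β true)).strict b a ∧
        (applySplit f (subProfile σ β false)).strict a b)).card : ℝ) / 2 ^ σ.length

/-- Probability (over a uniformly random split of `σ`) that `a` and `b` are tied in the
output of `f` on at least one side. -/
def probT [Fintype A] (f : SWF A m) (σ : Profile A m) (a b : A) : ℝ :=
  ((Finset.univ.filter fun β : Fin σ.length → Bool =>
      (applySplit f (subProfile σ β true)).tied a b ∨
      (applySplit f (subProfile σ β false)).tied a b).card : ℝ) / 2 ^ σ.length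

/-- A rule picking rule over sets of positional scoring vectors. -/
abbrev RPRVec (A : Type*) (m : ℕ) := Set (ScoreVec m) → Profile A m → Set (ScoreVec m)

/-- An RPR returns a nonempty subset of the candidate rules. -/
def IsRPR (Z : RPRVec A m) : Prop := ∀ F σ, Z F σ ⊆ F ∧ (Z F σ).Nonempty

/-- Anonymity of an RPR: invariance under permuting voters. -/
def AnonymousRPR (Z : RPRVec A m) : Prop :=
  ∀ (F : Set (ScoreVec m)) (σ σ' : Profile A m), σ.Perm σ' → Z F σ = Z F σ'

/-- Reversal symmetry of an RPR. -/
def ReversalSymmetric (Z : RPRVec A m) : Prop :=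
  ∀ F : Set (ScoreVec m), ScoreVec.revVec '' F = F →
    ∀ σ : Profile A m, ScoreVec.revVec '' (Z F σ) = Z F (revProfile σ)

/-- Plurality-shuffling consistency of an RPR. -/
def PSConsistent (hm : 2 ≤ m) (Z : RPRVec A m) : Prop :=
  ∀ F : Set (ScoreVec m), F.Finite → pluralityVec m hm ∈ F →
    ∀ σ : Profile A m, NoTies (posSWF (pluralityVec m hm) σ) →
      ∃ k : ℕ, 1 ≤ k ∧ ∀ k', k ≤ k' →
        Z F (shuffle (tailPositions m) k' σ) = {pluralityVec m hm}

/-- Union consistency of an RPR. -/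
def UnionConsistent (Z : RPRVec A m) : Prop :=
  ∀ (F : Set (ScoreVec m)) (σa σb : Profile A m), (Z F σa ∩ Z F σb).Nonempty →
    Z F (σa ++ σb) = Z F σa ∩ Z F σb

/-- The welfare-maximizing RPR with utility function `u`. -/
def welfareMax (u : Ranking A m → WeakRanking A → ℝ) : RPRVec A m := fun F σ =>
  {sv | sv ∈ F ∧ ∀ sv' ∈ F,
      (σ.map fun r => u r (posSWF sv' σ)).sum ≤ (σ.map fun r => u r (posSWF sv σ)).sum}

/-- The SWF induced by a (vector-valued) RPR, where it is singleton-valued. -/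
def inducedVec (Z : RPRVec A m) (F : Set (ScoreVec m)) : SWF A m := fun σ =>
  if h : ∃ sv, Z F σ = {sv} then posSWF h.choose σ else WeakRanking.allTied A

/-- The SWF induced by an (SWF-valued) RPR, where it is singleton-valued. -/
def inducedSWF (Z : Set (SWF A m) → Profile A m → Set (SWF A m)) (F : Set (SWF A m)) :
    SWF A m := fun σ =>
  if h : ∃ f, Z F σ = {f} then h.choose σ else WeakRanking.allTied A

/-- The SWF induced by AbC over scoring vectors. -/
def inducedAbCVec [Fintype A] (F : Set (ScoreVec m)) : SWF A m := fun σ =>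
  if h : ∃ sv, AbCVec F σ = {sv} then posSWF h.choose σ else WeakRanking.allTied A

/-- Anonymity of an SWF. -/
def AnonymousSWF (f : SWF A m) : Prop :=
  ∀ σ σ' : Profile A m, σ.Perm σ' → f σ = f σ'

/-- Relabeling of a weak ranking along a permutation of the alternatives. -/
def permuteWeak (π : Equiv.Perm A) (w : WeakRanking A) : WeakRanking A where
  ge a b := w.ge (π.symm a) (π.symm b)
  total a b := w.total _ _
  trans _ _ _ h1 h2 := w.trans _ _ _ h1 h2

/-- Neutrality of an SWF: permuting the alternatives permutes the output accordingly. -/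
def NeutralSWF (f : SWF A m) : Prop :=
  ∀ (π : Equiv.Perm A) (σ : Profile A m),
    f (σ.map fun r => π.symm.trans r) = permuteWeak π (f σ)

/-- `a` pairwise defeats `b` in profile `σ`. -/
def pairwiseDefeats (σ : Profile A m) (a b : A) : Prop :=
  (σ.countP fun r => decide (r b < r a)) < (σ.countP fun r => decide (r a < r b))

/-- A set `S` is dominant if every member pairwise defeats every non-member. -/
def DominantSet [Fintype A] (σ : Profile A m) (S : Finset A) : Prop :=
  ∀ a ∈ S, ∀ b ∉ S, pairwiseDefeats σ a b

/-- The Smith set: the smallest dominant set (the intersection of all dominant sets). -/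
def SmithSet [Fintype A] (σ : Profile A m) : Finset A :=
  Finset.univ.filter fun a => ∀ S : Finset A, DominantSet σ S → a ∈ S

/-- `a` is among the top-ranked alternatives of `w`. -/
def isTop (w : WeakRanking A) (a : A) : Prop := ∀ b, w.ge a b

def SmithCriterion [Fintype A] (f : SWF A m) : Prop :=
  ∀ (σ : Profile A m) (a : A), isTop (f σ) a → a ∈ SmithSet σ

def CondorcetConsistent [Fintype A] (f : SWF A m) : Prop :=
  ∀ (σ : Profile A m) (c : A), SmithSet σ = {c} →
    ∀ a, isTop (f σ) a → a ∈ SmithSet σ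

def MajorityWinnerCriterion [Fintype A] (f : SWF A m) : Prop :=
  ∀ (σ : Profile A m) (c : A), SmithSet σ = {c} → σ.length < 2 * topCount σ c →
    ∀ a, isTop (f σ) a → a ∈ SmithSet σ

def PairwiseMajorityConsistent (f : SWF A m) : Prop :=
  ∀ (σ : Profile A m) (r : WeakRanking A),
    (∀ a b, r.strict a b ↔ pairwiseDefeats σ a b) → f σ = r

def UnanimousSWF (f : SWF A m) : Prop :=
  ∀ (σ : Profile A m) (r : Ranking A m), σ ≠ [] → (∀ x ∈ σ, x = r) →
    f σ = Ranking.toWeak r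

/-- Rank of `a` in weak ranking `w`: one plus the number of alternatives strictly above. -/
def rankIn [Fintype A] (w : WeakRanking A) (a : A) : ℕ :=
  1 + (Finset.univ.filter fun b => w.strict b a).card

/-- `r'` is obtained from `r` by (weakly) raising `a`, everything else unchanged. -/
def RaisesWeak (a : A) (r r' : Ranking A m) : Prop :=
  r' a ≤ r a ∧ ∀ b c : A, b ≠ a → c ≠ a → (r b < r c ↔ r' b < r' c)

/-- Monotonicity of an SWF: raising an alternative never hurts its rank. -/
def MonotonicSWF [Fintype A] (f : SWF A m) : Prop :=
  ∀ (a : A) (σ σ' : Profile A m), List.Forall₂ (RaisesWeak a) σ σ' →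
    rankIn (f σ') a ≤ rankIn (f σ) a

/-- Total score of `a` for a list of (position ↦ alternative) ballots of length `ℓ`. -/
def ballotScore [Fintype A] {ℓ : ℕ} (sv : ScoreVec ℓ) (P : List (Fin ℓ → A)) (a : A) : ℝ :=
  (P.map fun b => ∑ i : Fin ℓ, if b i = a then sv.s i else 0).sum

/-- A scoring vector achieves perfect consistency on the given split `(P1, P2)`. -/
def PerfectConsistency [Fintype A] {ℓ : ℕ} (sv : ScoreVec ℓ)
    (P1 P2 : List (Fin ℓ → A)) : Prop :=
  ∀ a b : A, a ≠ b →
    0 < (ballotScore sv P1 a - ballotScore sv P1 b) *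
        (ballotScore sv P2 a - ballotScore sv P2 b)

/-- Complete a `k`-partial ballot to a full ballot on `m` positions by placing the missing
alternatives at the bottom, in a fixed order. -/
def completeBallot [Fintype A] [LinearOrder A] {k m : ℕ} (hk : 0 < k)
    (b : Fin k → A) : Fin m → A := fun j =>
  if h : j.val < k then b ⟨j.val, h⟩
  else ((Finset.univ \ Finset.univ.image b).sort (· ≤ ·)).getD (j.val - k) (b ⟨0, hk⟩)

/-- `k`-shuffling for (position ↦ alternative) ballots. -/
def shuffleBallots {m : ℕ} (S : Finset (Fin m)) (k : ℕ) (P : List (Fin m → A)) :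
    List (Fin m → A) :=
  P.flatMap fun f =>
    (permsOn S).flatMap fun π =>
      List.replicate (k * Nat.factorial m / Nat.factorial S.card) (f ∘ π.symm)


namespace PPC16

section NoOrder

variable {A : Type*} [Fintype A] {m k : ℕ}

/-- Score of alternative `a` on a single ballot. -/
def ballotTerm {ℓ : ℕ} (s : Fin ℓ → ℝ) (b : Fin ℓ → A) (a : A) : ℝ :=
  ∑ i, if b i = a then s i else 0

lemma ballotTerm_def {ℓ : ℕ} (s : Fin ℓ → ℝ) (b : Fin ℓ → A) (a : A) :
    ballotTerm s b a = ∑ i, if b i = a then s i else 0 := rfl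

/-- Score of an alternative for a list of ballots, w.r.t. an arbitrary score function. -/
def myScore {ℓ : ℕ} (s : Fin ℓ → ℝ) (P : List (Fin ℓ → A)) (a : A) : ℝ :=
  (P.map fun b => ∑ i, if b i = a then s i else 0).sum

lemma myScore_cons {ℓ : ℕ} (s : Fin ℓ → ℝ) (b : Fin ℓ → A) (P : List (Fin ℓ → A)) (a : A) :
    myScore s (b :: P) a = ballotTerm s b a + myScore s P a := by
  simp [myScore, ballotTerm]

lemma myScore_append {ℓ : ℕ} (s : Fin ℓ → ℝ) (P Q : List (Fin ℓ → A)) (a : A) :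
    myScore s (P ++ Q) a = myScore s P a + myScore s Q a := by
  simp [myScore]

lemma myScore_replicate {ℓ : ℕ} (s : Fin ℓ → ℝ) (n : ℕ) (b : Fin ℓ → A) (a : A) :
    myScore s (List.replicate n b) a = n * ballotTerm s b a := by
  simp [myScore, ballotTerm, List.map_replicate, List.sum_replicate, nsmul_eq_mul]

lemma ballotTerm_smul {ℓ : ℕ} (c : ℝ) (s : Fin ℓ → ℝ) (b : Fin ℓ → A) (a : A) :
    ballotTerm (fun i => c * s i) b a = c * ballotTerm s b a := by
  rw [ballotTerm_def, ballotTerm_def, Finset.mul_sum]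
  refine Finset.sum_congr rfl fun i _ => ?_
  by_cases h : b i = a <;> simp [h]

lemma myScore_smul {ℓ : ℕ} (c : ℝ) (s : Fin ℓ → ℝ) (P : List (Fin ℓ → A)) (a : A) :
    myScore (fun i => c * s i) P a = c * myScore s P a := by
  induction P with
  | nil => simp [myScore]
  | cons b P ih => rw [myScore_cons, myScore_cons, ih, mul_add, ballotTerm_smul]

lemma ballotScore_eq_myScore {ℓ : ℕ} (sv : ScoreVec ℓ) (P : List (Fin ℓ → A)) (a : A) :
    ballotScore sv P a = myScore sv.s P a := rfl

lemma ballotTerm_of_bij {ℓ : ℕ} (s : Fin ℓ → ℝ) {f : Fin ℓ → A} (hf : Function.Bijective f)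
    (a : A) : ballotTerm s f a = s ((Equiv.ofBijective f hf).symm a) := by
  rw [ballotTerm_def]
  have h1 : ∀ i, (f i = a) = (i = (Equiv.ofBijective f hf).symm a) := fun i => by
    rw [← Equiv.ofBijective_apply f hf, Equiv.apply_eq_iff_eq_symm_apply]
  simp only [h1]
  simp

lemma ballotTerm_eq_zero {ℓ : ℕ} (s : Fin ℓ → ℝ) {b : Fin ℓ → A} {a : A}
    (h : ∀ i, b i ≠ a) : ballotTerm s b a = 0 := by
  rw [ballotTerm_def]
  exact Finset.sum_eq_zero fun i _ => if_neg (h i)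

lemma ballotTerm_of_inj {ℓ : ℕ} (s : Fin ℓ → ℝ) {b : Fin ℓ → A}
    (hb : Function.Injective b) (i : Fin ℓ) : ballotTerm s b (b i) = s i := by
  rw [ballotTerm_def]
  have h1 : ∀ i' : Fin ℓ, (b i' = b i) = (i' = i) := fun i' => by
    simp [hb.eq_iff]
  simp only [h1]
  simp

end NoOrder

section Perms

variable {m k : ℕ}

@[reducible] def Sset (m k : ℕ) : Finset (Fin m) := Finset.univ.filter fun i => k - 1 ≤ i.val

def Gset (m k : ℕ) : Finset (Equiv.Perm (Fin m)) :=
  Finset.univ.filter fun π => ∀ i ∉ Sset m k, π i = i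

lemma mem_Sset {i : Fin m} : i ∈ Sset m k ↔ k - 1 ≤ i.val := by simp [Sset]

lemma mem_Gset {π : Equiv.Perm (Fin m)} : π ∈ Gset m k ↔ ∀ i ∉ Sset m k, π i = i := by
  simp [Gset]

lemma permsOn_Sset : permsOn (Sset m k) = (Gset m k).toList := rfl

lemma Gset_maps {π : Equiv.Perm (Fin m)} (hπ : π ∈ Gset m k) {i : Fin m}
    (hi : i ∈ Sset m k) : π i ∈ Sset m k := by
  by_contra h
  have h1 : π (π i) = π i := mem_Gset.1 hπ _ h
  have h2 : π i = i := π.injective h1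
  rw [h2] at h
  exact h hi

lemma Gset_mem_iff_apply_mem {π : Equiv.Perm (Fin m)} (hπ : π ∈ Gset m k) {i : Fin m} :
    i ∈ Sset m k ↔ π i ∈ Sset m k := by
  constructor
  · exact fun hi => Gset_maps hπ hi
  · intro hpi
    by_contra h
    rw [mem_Gset.1 hπ _ h] at hpi
    exact h hpi

lemma one_mem_Gset : (1 : Equiv.Perm (Fin m)) ∈ Gset m k := by
  rw [mem_Gset]; intro i _; rfl

lemma Gset_card_pos : 0 < (Gset m k).card :=
  Finset.card_pos.2 ⟨1, one_mem_Gset⟩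

lemma swap_mem_Gset {p q : Fin m} (hp : p ∈ Sset m k) (hq : q ∈ Sset m k) :
    Equiv.swap p q ∈ Gset m k := by
  rw [mem_Gset]
  intro i hi
  exact Equiv.swap_apply_of_ne_of_ne (by rintro rfl; exact hi hp) (by rintro rfl; exact hi hq)

lemma mul_mem_Gset {π τ : Equiv.Perm (Fin m)} (hπ : π ∈ Gset m k) (hτ : τ ∈ Gset m k) :
    π * τ ∈ Gset m k := by
  rw [mem_Gset] at *
  intro i hi
  have h1 : τ i = i := hτ i hi
  have h2 : (π * τ) i = π i := by simp [Equiv.Perm.mul_apply, h1]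
  rw [h2, hπ i hi]

lemma sum_Sset_comp (π : Equiv.Perm (Fin m)) (hπ : π ∈ Gset m k) (s : Fin m → ℝ) :
    ∑ j ∈ Sset m k, s (π j) = ∑ j ∈ Sset m k, s j :=
  Finset.sum_equiv π (fun _ => Gset_mem_iff_apply_mem hπ) (fun _ _ => rfl)

lemma sumG_eq_sumG {p q : Fin m} (hp : p ∈ Sset m k) (hq : q ∈ Sset m k) (s : Fin m → ℝ) :
    ∑ π ∈ Gset m k, s (π q) = ∑ π ∈ Gset m k, s (π p) := by
  refine Finset.sum_equiv (Equiv.mulRight (Equiv.swap p q)) (fun π => ?_) (fun π _ => ?_)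
  · simp only [Equiv.coe_mulRight]
    constructor
    · exact fun h => mul_mem_Gset h (swap_mem_Gset hp hq)
    · intro h
      have h2 := mul_mem_Gset h (swap_mem_Gset hp hq)
      rwa [mul_assoc, Equiv.swap_mul_self, mul_one] at h2
  · simp [Equiv.coe_mulRight, Equiv.Perm.mul_apply, Equiv.swap_apply_left]

lemma Sset_card_pos (hm : 2 ≤ m) (hkm : k ≤ m) : 0 < (Sset m k).card :=
  Finset.card_pos.2 ⟨⟨m - 1, by omega⟩, mem_Sset.2 (by simp; omega)⟩

/-- The average of `s` over the shuffled positions. -/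
def tval (m k : ℕ) (s : Fin m → ℝ) : ℝ := (∑ j ∈ Sset m k, s j) / (Sset m k).card

lemma sumG (hm : 2 ≤ m) (hkm : k ≤ m) (s : Fin m → ℝ) (p : Fin m) :
    ∑ π ∈ Gset m k, s (π p)
      = (Gset m k).card * (if p ∈ Sset m k then tval m k s else s p) := by
  by_cases hp : p ∈ Sset m k
  · have key : ((Sset m k).card : ℝ) * ∑ π ∈ Gset m k, s (π p)
        = (Gset m k).card * ∑ j ∈ Sset m k, s j := by
      calc ((Sset m k).card : ℝ) * ∑ π ∈ Gset m k, s (π p)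
          = ∑ _q ∈ Sset m k, ∑ π ∈ Gset m k, s (π p) := by
            rw [Finset.sum_const, nsmul_eq_mul]
        _ = ∑ q ∈ Sset m k, ∑ π ∈ Gset m k, s (π q) :=
            Finset.sum_congr rfl fun q hq => (sumG_eq_sumG hp hq s).symm
        _ = ∑ π ∈ Gset m k, ∑ q ∈ Sset m k, s (π q) := Finset.sum_comm
        _ = ∑ π ∈ Gset m k, ∑ j ∈ Sset m k, s j :=
            Finset.sum_congr rfl fun π hπ => sum_Sset_comp π hπ s
        _ = (Gset m k).card * ∑ j ∈ Sset m k, s j := by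
            rw [Finset.sum_const, nsmul_eq_mul]
    have hc : ((Sset m k).card : ℝ) ≠ 0 :=
      Nat.cast_ne_zero.2 (Sset_card_pos hm hkm).ne'
    rw [if_pos hp, tval]
    field_simp
    linear_combination key
  · rw [if_neg hp]
    rw [Finset.sum_congr rfl fun π hπ => by rw [mem_Gset.1 hπ p hp],
      Finset.sum_const, nsmul_eq_mul]

/-- The effective length-`k` score function (shifted by `-t`). -/
def wvec (hkm : k ≤ m) (s : Fin m → ℝ) : Fin k → ℝ := fun i =>
  if i.val = k - 1 then 0 else s ⟨i.val, lt_of_lt_of_le i.isLt hkm⟩ - tval m k s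

end Perms

section Order

variable {A : Type*} [Fintype A] [LinearOrder A] {m k : ℕ}

lemma sort_length (hcard : Fintype.card A = m) {b : Fin k → A}
    (hb : Function.Injective b) :
    ((Finset.univ \ Finset.univ.image b).sort (· ≤ ·)).length = m - k := by
  rw [Finset.length_sort, Finset.card_sdiff_of_subset (Finset.subset_univ _), Finset.card_univ, hcard,
    Finset.card_image_of_injective _ hb, Finset.card_univ, Fintype.card_fin]

lemma completeBallot_lt (hk : 0 < k) {b : Fin k → A} (j : Fin m) (h : j.val < k) :
    completeBallot (m := m) hk b j = b ⟨j.val, h⟩ := dif_pos h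

lemma completeBallot_ge (hk : 0 < k) (hcard : Fintype.card A = m) {b : Fin k → A}
    (hb : Function.Injective b) (j : Fin m) (h : ¬ j.val < k) :
    completeBallot (m := m) hk b j =
      ((Finset.univ \ Finset.univ.image b).sort (· ≤ ·))[j.val - k]'(by
        rw [sort_length hcard hb]; omega) := by
  rw [completeBallot, dif_neg h, List.getD_eq_getElem]

lemma completeBallot_ge_not_mem (hk : 0 < k) (hcard : Fintype.card A = m) {b : Fin k → A}
    (hb : Function.Injective b) (j : Fin m) (h : ¬ j.val < k) :
    completeBallot (m := m) hk b j ∉ Finset.univ.image b := by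
  rw [completeBallot_ge hk hcard hb j h]
  have hmem : ((Finset.univ \ Finset.univ.image b).sort (· ≤ ·))[j.val - k]'(by
      rw [sort_length hcard hb]; omega) ∈
      ((Finset.univ \ Finset.univ.image b).sort (· ≤ ·)) := List.getElem_mem _
  rw [Finset.mem_sort, Finset.mem_sdiff] at hmem
  exact hmem.2

lemma completeBallot_injective (hk : 0 < k) (hcard : Fintype.card A = m) {b : Fin k → A}
    (hb : Function.Injective b) :
    Function.Injective (completeBallot (m := m) hk b) := by
  intro j1 j2 heq
  by_cases h1 : j1.val < k <;> by_cases h2 : j2.val < k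
  · rw [completeBallot_lt hk j1 h1, completeBallot_lt hk j2 h2] at heq
    have h3 := hb heq
    simp only [Fin.mk.injEq] at h3
    exact Fin.ext h3
  · exfalso
    apply completeBallot_ge_not_mem hk hcard hb j2 h2
    rw [← heq, completeBallot_lt hk j1 h1]
    exact Finset.mem_image_of_mem b (Finset.mem_univ _)
  · exfalso
    apply completeBallot_ge_not_mem hk hcard hb j1 h1
    rw [heq, completeBallot_lt hk j2 h2]
    exact Finset.mem_image_of_mem b (Finset.mem_univ _)
  · rw [completeBallot_ge hk hcard hb j1 h1, completeBallot_ge hk hcard hb j2 h2] at heq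
    have hnd : ((Finset.univ \ Finset.univ.image b).sort (· ≤ ·)).Nodup :=
      Finset.sort_nodup _ _
    have h3 := (hnd.getElem_inj_iff).1 heq
    have hj1 := j1.isLt
    have hj2 := j2.isLt
    exact Fin.ext (by omega)

lemma completeBallot_bijective (hk : 0 < k) (hkm : k ≤ m) (hcard : Fintype.card A = m)
    {b : Fin k → A} (hb : Function.Injective b) :
    Function.Bijective (completeBallot (m := m) hk b) :=
  (Fintype.bijective_iff_injective_and_card _).2
    ⟨completeBallot_injective hk hcard hb, by rw [Fintype.card_fin, hcard]⟩

lemma perBallot (hm : 2 ≤ m) (hk2 : 2 ≤ k) (hkm : k ≤ m) (hcard : Fintype.card A = m)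
    (s : Fin m → ℝ) {b : Fin k → A} (hb : Function.Injective b) (a : A) :
    ∑ π ∈ Gset m k,
        ballotTerm s (completeBallot (m := m) (by omega : 0 < k) b ∘ π.symm) a
      = (Gset m k).card * (tval m k s + ballotTerm (wvec hkm s) b a) := by
  have hk : 0 < k := by omega
  have hbij := completeBallot_bijective (m := m) hk hkm hcard hb
  set cb := completeBallot (m := m) hk b with hcb
  set pos := (Equiv.ofBijective cb hbij).symm a with hpos
  have hcbpos : cb pos = a := (Equiv.ofBijective cb hbij).apply_symm_apply a
  have step1 : ∀ π ∈ Gset m k, ballotTerm s (cb ∘ π.symm) a = s (π pos) := by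
    intro π _
    have hbij2 : Function.Bijective (cb ∘ π.symm) := hbij.comp π.symm.bijective
    rw [ballotTerm_of_bij s hbij2 a]
    congr 1
    rw [Equiv.symm_apply_eq]
    show a = (cb ∘ π.symm) (π pos)
    simp [hcbpos]
  rw [Finset.sum_congr rfl step1, sumG hm hkm s pos]
  congr 1
  by_cases hex : ∃ i, b i = a
  · obtain ⟨i, hi⟩ := hex
    have hposval : pos = ⟨i.val, lt_of_lt_of_le i.isLt hkm⟩ := by
      rw [hpos, Equiv.symm_apply_eq]
      show a = cb ⟨i.val, lt_of_lt_of_le i.isLt hkm⟩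
      rw [hcb, completeBallot_lt (m := m) hk ⟨i.val, lt_of_lt_of_le i.isLt hkm⟩ i.isLt]
      simp [← hi]
    have hsum : ballotTerm (wvec hkm s) b a = wvec hkm s i := by
      rw [← hi]
      exact ballotTerm_of_inj _ hb i
    rw [hsum]
    by_cases hik : i.val = k - 1
    · have hmem : pos ∈ Sset m k := by rw [hposval, mem_Sset]; simp; omega
      rw [if_pos hmem, wvec, if_pos hik, add_zero]
    · have hmem : pos ∉ Sset m k := by
        rw [hposval, mem_Sset]
        simp only
        have := i.isLt
        omega
      rw [if_neg hmem, wvec, if_neg hik, hposval]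
      ring
  · push_neg at hex
    have hsum : ballotTerm (wvec hkm s) b a = 0 := ballotTerm_eq_zero _ hex
    have hmem : pos ∈ Sset m k := by
      rw [mem_Sset]
      by_contra h
      have hlt : pos.val < k := by omega
      have h4 : b ⟨pos.val, hlt⟩ = a := by
        rw [← hcbpos, hcb, completeBallot_lt hk _ hlt]
      exact hex _ h4
    rw [if_pos hmem, hsum, add_zero]

lemma myScore_flatMap {ℓ : ℕ} {β : Type*} (s : Fin ℓ → ℝ) (l : List β)
    (F : β → List (Fin ℓ → A)) (a : A) :
    myScore s (l.flatMap F) a = (l.map fun x => myScore s (F x) a).sum := by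
  induction l with
  | nil => simp [myScore]
  | cons x l ih => rw [List.flatMap_cons, myScore_append, ih, List.map_cons, List.sum_cons]

lemma score_shuffle (hm : 2 ≤ m) (hk2 : 2 ≤ k) (hkm : k ≤ m) (hcard : Fintype.card A = m)
    (s : Fin m → ℝ) (P : List (Fin k → A)) (hinj : ∀ b ∈ P, Function.Injective b) (a : A) :
    myScore s (shuffleBallots (Sset m k) 1
        (P.map (completeBallot (m := m) (by omega : 0 < k)))) a
      = ((1 * Nat.factorial m / Nat.factorial (Sset m k).card : ℕ) : ℝ)
          * ((Gset m k).card : ℝ)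
          * (tval m k s * P.length + myScore (wvec hkm s) P a) := by
  induction P with
  | nil => simp [shuffleBallots, myScore]
  | cons b P ih =>
      have hb : Function.Injective b := hinj b List.mem_cons_self
      have hinj' : ∀ b' ∈ P, Function.Injective b' := fun b' hb' =>
        hinj b' (List.mem_cons_of_mem _ hb')
      rw [List.map_cons]
      rw [show shuffleBallots (Sset m k) 1
          (completeBallot (m := m) (by omega : 0 < k) b ::
            P.map (completeBallot (m := m) (by omega : 0 < k)))
        = ((permsOn (Sset m k)).flatMap fun π =>
            List.replicate (1 * Nat.factorial m / Nat.factorial (Sset m k).card)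
              (completeBallot (m := m) (by omega : 0 < k) b ∘ π.symm))
          ++ shuffleBallots (Sset m k) 1
              (P.map (completeBallot (m := m) (by omega : 0 < k))) from
        List.flatMap_cons ..]
      rw [myScore_append, ih hinj', myScore_flatMap, permsOn_Sset]
      rw [show ((Gset m k).toList.map fun π =>
          myScore s (List.replicate (1 * Nat.factorial m / Nat.factorial (Sset m k).card)
            (completeBallot (m := m) (by omega : 0 < k) b ∘ π.symm)) a).sum
        = ∑ π ∈ Gset m k,
            myScore s (List.replicate (1 * Nat.factorial m / Nat.factorial (Sset m k).card)
              (completeBallot (m := m) (by omega : 0 < k) b ∘ π.symm)) a from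
        Finset.sum_map_toList _ _]
      have hrepl : ∀ π ∈ Gset m k,
          myScore s (List.replicate (1 * Nat.factorial m / Nat.factorial (Sset m k).card)
            (completeBallot (m := m) (by omega : 0 < k) b ∘ π.symm)) a
          = ((1 * Nat.factorial m / Nat.factorial (Sset m k).card : ℕ) : ℝ)
              * ballotTerm s (completeBallot (m := m) (by omega : 0 < k) b ∘ π.symm) a :=
        fun π _ => myScore_replicate ..
      rw [Finset.sum_congr rfl hrepl, ← Finset.mul_sum,
        perBallot hm hk2 hkm hcard s hb a, myScore_cons, List.length_cons]
      push_cast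
      ring

end Order

/-- Nonnegativity of monotone score vectors. -/
lemma ScoreVec.s_nonneg {ℓ : ℕ} (sv : ScoreVec ℓ) (i : Fin ℓ) : 0 ≤ sv.s i := by
  have h : 0 < ℓ := i.pos
  have hle : i ≤ ⟨ℓ - 1, Nat.sub_lt h Nat.one_pos⟩ := by
    rw [Fin.le_def]
    have := i.isLt
    simp only
    omega
  have h2 := sv.anti hle
  rwa [sv.last h] at h2

lemma ScoreVec.s_le_one {ℓ : ℕ} (sv : ScoreVec ℓ) (i : Fin ℓ) : sv.s i ≤ 1 := by
  have h : 0 < ℓ := i.pos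
  have hle : (⟨0, h⟩ : Fin ℓ) ≤ i := by
    rw [Fin.le_def]
    simp only
    omega
  have h2 := sv.anti hle
  rwa [sv.first h] at h2

end PPC16


namespace PPC16

section Vecs

variable {m k : ℕ}

lemma sv_nonneg {ℓ : ℕ} (sv : ScoreVec ℓ) (i : Fin ℓ) : 0 ≤ sv.s i := by
  have h : 0 < ℓ := i.pos
  have hle : i ≤ ⟨ℓ - 1, Nat.sub_lt h Nat.one_pos⟩ := by
    rw [Fin.le_def]
    have := i.isLt
    simp only
    omega
  have h2 := sv.anti hle
  rwa [sv.last h] at h2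

lemma sv_le_one {ℓ : ℕ} (sv : ScoreVec ℓ) (i : Fin ℓ) : sv.s i ≤ 1 := by
  have h : 0 < ℓ := i.pos
  have hle : (⟨0, h⟩ : Fin ℓ) ≤ i := by
    rw [Fin.le_def]
    simp only
    omega
  have h2 := sv.anti hle
  rwa [sv.first h] at h2

lemma wvec_is_eq (hkm : k ≤ m) (s : Fin m → ℝ) {i : Fin k} (h : i.val = k - 1) :
    wvec hkm s i = 0 := if_pos h

lemma wvec_is_ne (hkm : k ≤ m) (s : Fin m → ℝ) {i : Fin k} (h : ¬ i.val = k - 1) :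
    wvec hkm s i = s ⟨i.val, lt_of_lt_of_le i.isLt hkm⟩ - tval m k s := if_neg h

/-- Extend a length-`k` scoring vector by zeroes. -/
def extendVec (hk2 : 2 ≤ k) (hkm : k ≤ m) (sv : ScoreVec k) : ScoreVec m where
  s i := if h : i.val < k then sv.s ⟨i.val, h⟩ else 0
  anti := by
    intro i j hij
    dsimp only
    have hij' : i.val ≤ j.val := hij
    by_cases hj : j.val < k
    · have hi : i.val < k := by omega
      rw [dif_pos hi, dif_pos hj]
      exact sv.anti (show (⟨i.val, hi⟩ : Fin k) ≤ ⟨j.val, hj⟩ from hij')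
    · by_cases hi : i.val < k
      · rw [dif_pos hi, dif_neg hj]
        exact sv_nonneg sv _
      · rw [dif_neg hi, dif_neg hj]
  first h := by
    have h0 : (0:ℕ) < k := by omega
    show (if h' : (0:ℕ) < k then sv.s ⟨0, h'⟩ else 0) = 1
    rw [dif_pos h0]
    exact sv.first h0
  last h := by
    show (if h' : m - 1 < k then sv.s ⟨m - 1, h'⟩ else 0) = 0
    by_cases hmk : m - 1 < k
    · rw [dif_pos hmk]
      have he : (⟨m - 1, hmk⟩ : Fin k) = ⟨k - 1, by omega⟩ := Fin.ext (by simp only; omega)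
      rw [he]
      exact sv.last (by omega)
    · rw [dif_neg hmk]

lemma tval_extendVec (hm : 2 ≤ m) (hk2 : 2 ≤ k) (hkm : k ≤ m) (sv : ScoreVec k) :
    tval m k (extendVec hk2 hkm sv).s = 0 := by
  rw [tval]
  have h0 : ∑ j ∈ Sset m k, (extendVec hk2 hkm sv).s j = 0 := by
    refine Finset.sum_eq_zero fun j hj => ?_
    have hj' : k - 1 ≤ j.val := mem_Sset.1 hj
    show (if h : j.val < k then sv.s ⟨j.val, h⟩ else 0) = 0
    by_cases h : j.val < k
    · rw [dif_pos h]
      have he : (⟨j.val, h⟩ : Fin k) = ⟨k - 1, by omega⟩ := Fin.ext (by simp only; omega)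
      rw [he]
      exact sv.last (by omega)
    · rw [dif_neg h]
  rw [h0, zero_div]

lemma wvec_extendVec (hm : 2 ≤ m) (hk2 : 2 ≤ k) (hkm : k ≤ m) (sv : ScoreVec k) :
    wvec hkm (extendVec hk2 hkm sv).s = sv.s := by
  funext i
  by_cases h : i.val = k - 1
  · rw [wvec_is_eq hkm _ h]
    have he : i = ⟨k - 1, by omega⟩ := Fin.ext (by simp only; omega)
    rw [he]
    exact (sv.last (by omega)).symm
  · rw [wvec_is_ne hkm _ h, tval_extendVec hm hk2 hkm sv, sub_zero]
    show (if h' : i.val < k then sv.s ⟨i.val, h'⟩ else 0) = sv.s i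
    rw [dif_pos i.isLt]

lemma tval_le (hm : 2 ≤ m) (hk2 : 2 ≤ k) (hkm : k ≤ m) (sv : ScoreVec m) :
    tval m k sv.s ≤ sv.s ⟨k - 1, by omega⟩ := by
  rw [tval]
  have hb : ∀ j ∈ Sset m k, sv.s j ≤ sv.s ⟨k - 1, by omega⟩ := fun j hj =>
    sv.anti (by rw [Fin.le_def]; exact mem_Sset.1 hj)
  have h2 := Finset.sum_le_card_nsmul _ _ _ hb
  rw [nsmul_eq_mul] at h2
  have hc : (0:ℝ) < (Sset m k).card := by exact_mod_cast Sset_card_pos hm hkm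
  rw [div_le_iff₀ hc]
  linarith [h2]

lemma tval_lt_one (hm : 2 ≤ m) (hk2 : 2 ≤ k) (hkm : k ≤ m) (sv : ScoreVec m) :
    tval m k sv.s < 1 := by
  rw [tval]
  have hlastmem : (⟨m - 1, by omega⟩ : Fin m) ∈ Sset m k :=
    mem_Sset.2 (by simp only; omega)
  have hsplit : (∑ j ∈ (Sset m k).erase ⟨m - 1, by omega⟩, sv.s j)
      + sv.s ⟨m - 1, by omega⟩ = ∑ j ∈ Sset m k, sv.s j :=
    Finset.sum_erase_add _ _ hlastmem
  have hzero : sv.s ⟨m - 1, by omega⟩ = 0 := sv.last (by omega)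
  have hb : ∀ j ∈ (Sset m k).erase ⟨m - 1, by omega⟩, sv.s j ≤ 1 := fun j _ =>
    sv_le_one sv j
  have h2 := Finset.sum_le_card_nsmul _ _ _ hb
  rw [nsmul_eq_mul, mul_one, Finset.card_erase_of_mem hlastmem] at h2
  have hc : 0 < (Sset m k).card := Sset_card_pos hm hkm
  rw [div_lt_one (by exact_mod_cast hc)]
  rw [Nat.cast_sub hc] at h2
  push_cast at h2
  linarith [h2, hsplit, hzero]

/-- The effective length-`k` scoring vector obtained from a length-`m` one. -/
def shrinkVec (hm : 2 ≤ m) (hk2 : 2 ≤ k) (hkm : k ≤ m) (sv : ScoreVec m) : ScoreVec k where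
  s i := (1 - tval m k sv.s)⁻¹ * wvec hkm sv.s i
  anti := by
    intro i j hij
    dsimp only
    have hij' : i.val ≤ j.val := hij
    have ht1 : tval m k sv.s < 1 := tval_lt_one hm hk2 hkm sv
    have hinv : (0:ℝ) ≤ (1 - tval m k sv.s)⁻¹ := inv_nonneg.2 (by linarith)
    refine mul_le_mul_of_nonneg_left ?_ hinv
    by_cases hjk : j.val = k - 1
    · rw [wvec_is_eq hkm _ hjk]
      by_cases hik : i.val = k - 1
      · rw [wvec_is_eq hkm _ hik]
      · rw [wvec_is_ne hkm _ hik]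
        have hle1 : tval m k sv.s ≤ sv.s ⟨k - 1, by omega⟩ := tval_le hm hk2 hkm sv
        have hle2 : sv.s ⟨k - 1, by omega⟩ ≤ sv.s ⟨i.val, lt_of_lt_of_le i.isLt hkm⟩ := by
          apply sv.anti
          rw [Fin.le_def]
          have := i.isLt
          simp only
          omega
        linarith
    · have hik : ¬ i.val = k - 1 := by have := j.isLt; omega
      rw [wvec_is_ne hkm _ hjk, wvec_is_ne hkm _ hik]
      have h3 := sv.anti (show (⟨i.val, lt_of_lt_of_le i.isLt hkm⟩ : Fin m)
        ≤ ⟨j.val, lt_of_lt_of_le j.isLt hkm⟩ from by rw [Fin.le_def]; exact hij')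
      linarith
  first h := by
    have h0 : ¬ ((⟨0, h⟩ : Fin k)).val = k - 1 := by simp only; omega
    rw [wvec_is_ne hkm _ h0]
    have h1 : sv.s ⟨(⟨0, h⟩ : Fin k).val, lt_of_lt_of_le (⟨0, h⟩ : Fin k).isLt hkm⟩ = 1 :=
      sv.first (by omega)
    rw [h1]
    have ht1 : tval m k sv.s < 1 := tval_lt_one hm hk2 hkm sv
    exact inv_mul_cancel₀ (by linarith)
  last h := by
    rw [wvec_is_eq hkm _ rfl, mul_zero]

end Vecs

end PPC16

open PPC16


/-- Let `P` be a `k`-partial profile, given by its two sides `P1, P2` of a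
split with `|N₁| = |N₂|` (ballots are injective position-to-alternative maps on `Fin k`).
Let `P'` be the completion of `P` and `P'' = Shuffle_{[k,m]}^1(P')`, each copy inheriting
the side of the original voter. Then some length-`k` scoring vector achieves perfect
consistency on the split of `P` iff some length-`m` scoring vector achieves perfect
consistency on the inherited split of `P''`. -/
theorem partial_perfect_consistency_iff_shuffled {A : Type*} [Fintype A] [LinearOrder A]
    {m k : ℕ} (hm : 2 ≤ m) (hcard : Fintype.card A = m) (hk2 : 2 ≤ k) (hkm : k ≤ m)
    (P1 P2 : List (Fin k → A))
    (hinj1 : ∀ b ∈ P1, Function.Injective b)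
    (hinj2 : ∀ b ∈ P2, Function.Injective b)
    (hlen : P1.length = P2.length) :
    (∃ sv : ScoreVec k, PerfectConsistency sv P1 P2) ↔
    (∃ sv : ScoreVec m,
      PerfectConsistency sv
        (shuffleBallots (Finset.univ.filter fun i : Fin m => k - 1 ≤ i.val) 1
          (P1.map (completeBallot (A := A) (m := m) (by omega))))
        (shuffleBallots (Finset.univ.filter fun i : Fin m => k - 1 ≤ i.val) 1
          (P2.map (completeBallot (A := A) (m := m) (by omega))))) := by
  classical
  have hk : 0 < k := by omega
  set C : ℝ := ((1 * Nat.factorial m / Nat.factorial (Sset m k).card : ℕ) : ℝ)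
      * ((Gset m k).card : ℝ) with hCdef
  have hCpos : 0 < C := by
    rw [hCdef]
    have h1 : (Sset m k).card ≤ m := by
      calc (Sset m k).card ≤ (Finset.univ : Finset (Fin m)).card :=
            Finset.card_filter_le _ _
        _ = m := by simp
    have h2 : 0 < 1 * Nat.factorial m / Nat.factorial (Sset m k).card :=
      Nat.div_pos (by simpa using Nat.factorial_le h1) (Nat.factorial_pos _)
    have h3 : 0 < (Gset m k).card := Gset_card_pos
    exact mul_pos (by exact_mod_cast h2) (by exact_mod_cast h3)
  have key : ∀ (s : Fin m → ℝ) (P : List (Fin k → A))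
      (_ : ∀ b ∈ P, Function.Injective b) (a b : A),
      myScore s (shuffleBallots (Sset m k) 1 (P.map (completeBallot (m := m) hk))) a
        - myScore s (shuffleBallots (Sset m k) 1 (P.map (completeBallot (m := m) hk))) b
      = C * (myScore (wvec hkm s) P a - myScore (wvec hkm s) P b) := by
    intro s P hPinj a b
    rw [score_shuffle hm hk2 hkm hcard s P hPinj a,
        score_shuffle hm hk2 hkm hcard s P hPinj b, hCdef]
    ring
  constructor
  · rintro ⟨sv, hpc⟩
    refine ⟨extendVec hk2 hkm sv, ?_⟩
    intro a b hab
    have e1 := key (extendVec hk2 hkm sv).s P1 hinj1 a b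
    have e2 := key (extendVec hk2 hkm sv).s P2 hinj2 a b
    rw [wvec_extendVec hm hk2 hkm sv] at e1 e2
    have goal' : 0 < (myScore (extendVec hk2 hkm sv).s (shuffleBallots (Sset m k) 1
          (P1.map (completeBallot (m := m) hk))) a
        - myScore (extendVec hk2 hkm sv).s (shuffleBallots (Sset m k) 1
          (P1.map (completeBallot (m := m) hk))) b)
        * (myScore (extendVec hk2 hkm sv).s (shuffleBallots (Sset m k) 1
          (P2.map (completeBallot (m := m) hk))) a
        - myScore (extendVec hk2 hkm sv).s (shuffleBallots (Sset m k) 1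
          (P2.map (completeBallot (m := m) hk))) b) := by
      rw [e1, e2]
      have hprod : 0 < (myScore sv.s P1 a - myScore sv.s P1 b)
          * (myScore sv.s P2 a - myScore sv.s P2 b) := hpc a b hab
      nlinarith [mul_pos (mul_pos hCpos hCpos) hprod]
    exact goal'
  · rintro ⟨sv, hpc⟩
    have ht1 : tval m k sv.s < 1 := tval_lt_one hm hk2 hkm sv
    refine ⟨shrinkVec hm hk2 hkm sv, ?_⟩
    intro a b hab
    have e1 := key sv.s P1 hinj1 a b
    have e2 := key sv.s P2 hinj2 a b
    have hprod : 0 < (myScore sv.s (shuffleBallots (Sset m k) 1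
          (P1.map (completeBallot (m := m) hk))) a
        - myScore sv.s (shuffleBallots (Sset m k) 1
          (P1.map (completeBallot (m := m) hk))) b)
        * (myScore sv.s (shuffleBallots (Sset m k) 1
          (P2.map (completeBallot (m := m) hk))) a
        - myScore sv.s (shuffleBallots (Sset m k) 1
          (P2.map (completeBallot (m := m) hk))) b) := hpc a b hab
    rw [e1, e2] at hprod
    have hD : 0 < (myScore (wvec hkm sv.s) P1 a - myScore (wvec hkm sv.s) P1 b)
        * (myScore (wvec hkm sv.s) P2 a - myScore (wvec hkm sv.s) P2 b) := by
      by_contra hcon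
      push_neg at hcon
      nlinarith [hprod, hcon, mul_pos hCpos hCpos]
    have hscore : ∀ (P : List (Fin k → A)) (c : A),
        ballotScore (shrinkVec hm hk2 hkm sv) P c
          = (1 - tval m k sv.s)⁻¹ * myScore (wvec hkm sv.s) P c := fun P c =>
      myScore_smul _ _ P c
    rw [hscore P1 a, hscore P1 b, hscore P2 a, hscore P2 b]
    have hinv : 0 < (1 - tval m k sv.s)⁻¹ := inv_pos.2 (by linarith)
    nlinarith [hD, mul_pos (mul_pos hinv hinv) hD]

end
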